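/- Let X be a topological space, A : X → Mat(n×n,ℂ) continuous, and let ξ ∈ X be a point that is not a splitting point of the eigenvalues of A. Let U be a connected open neighborhood of ξ containing no splitting points. Then the following are equivalent: (a) there exists a neighborhood V ⊆ U of ξ such that for each 1 ≤ k ≤ n−1 the map ζ ↦ rank((Θ_{A(ζ)})^k) is constant on V; (b) there exists a neighborhood V ⊆ U of ξ such that for each 1 ≤ k ≤ n−1 and each of the continuous eigenvalue functions λ_1,…,λ_m on U (tracking the distinct eigenvalues of A with constant algebraic multiplicities), the map ζ ↦ rank((λ_j(ζ)I − A(ζ))^k) is constant on V. -/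

import Mathlib

/-- The set of (distinct) eigenvalues of a complex matrix. -/
noncomputable def eigFinset {n : ℕ} (Φ : Matrix (Fin n) (Fin n) ℂ) : Finset ℂ :=
  (Matrix.charpoly Φ).roots.toFinset

/-- `Θ_Φ = (λ₁I − Φ)·…·(λ_mI − Φ)`, the product over the distinct eigenvalues of `Φ`. -/
noncomputable def thetaMat {n : ℕ} (Φ : Matrix (Fin n) (Fin n) ℂ) : Matrix (Fin n) (Fin n) ℂ :=
  Polynomial.aeval Φ (∏ μ ∈ eigFinset Φ, (Polynomial.C μ - Polynomial.X))

/-- `ξ` is a splitting point of the eigenvalues of `A`. -/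
def IsSplitPtMat {X : Type*} [TopologicalSpace X] {n : ℕ}
    (A : X → Matrix (Fin n) (Fin n) ℂ) (ξ : X) : Prop :=
  ∀ U ∈ nhds ξ, ∃ ζ ∈ U, (eigFinset (A ξ)).card < (eigFinset (A ζ)).card

open Polynomial Matrix Module

namespace Stmt10Aux

/-- The nullity of a matrix. -/
noncomputable def nullity {p q : ℕ} (M : Matrix (Fin p) (Fin q) ℂ) : ℕ :=
  Module.finrank ℂ (LinearMap.ker M.mulVecLin)

lemma rank_add_nullity {p q : ℕ} (M : Matrix (Fin p) (Fin q) ℂ) :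
    M.rank + nullity M = q := by
  have := LinearMap.finrank_range_add_finrank_ker M.mulVecLin
  rwa [Module.finrank_fintype_fun_eq_card, Fintype.card_fin] at this

lemma exists_rows_li {p q : ℕ} (M : Matrix (Fin p) (Fin q) ℂ) {r : ℕ} (hr : M.rank = r) :
    ∃ f : Fin r → Fin p, LinearIndependent ℂ (fun i => M (f i)) := by
  classical
  obtain ⟨b, hbt, hspan, hli⟩ := exists_linearIndependent ℂ (Set.range M)
  have hbfin : b.Finite := (Set.finite_range M).subset hbt
  have : Fintype b := hbfin.fintype
  have hcard : b.toFinset.card = r := by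
    rw [← hr, M.rank_eq_finrank_span_row, Matrix.row, ← hspan, finrank_span_set_eq_card hli]
  have hcard' : Fintype.card b = r := by rwa [← Set.toFinset_card]
  let e : Fin r ≃ b := (Fintype.equivFinOfCardEq hcard').symm
  have hmem : ∀ i : Fin r, (e i : Fin q → ℂ) ∈ Set.range M := fun i => hbt (e i).2
  refine ⟨fun i => (hmem i).choose, ?_⟩
  have hfe : (fun i => M ((hmem i).choose)) = (fun x : b => (x : Fin q → ℂ)) ∘ e := by
    funext i
    exact (hmem i).choose_spec
  rw [hfe]
  exact hli.comp e e.injective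

lemma submatrix_factor {p q r s : ℕ} (M : Matrix (Fin p) (Fin q) ℂ)
    (f : Fin r → Fin p) (g : Fin s → Fin q) :
    M.submatrix f g =
      (1 : Matrix (Fin p) (Fin p) ℂ).submatrix f id * M *
        (1 : Matrix (Fin q) (Fin q) ℂ).submatrix id g := by
  ext i j
  simp [Matrix.mul_apply, Matrix.one_apply, Finset.sum_ite_eq, Finset.sum_ite_eq']

lemma rank_submatrix_le' {p q r s : ℕ} (M : Matrix (Fin p) (Fin q) ℂ)
    (f : Fin r → Fin p) (g : Fin s → Fin q) :
    (M.submatrix f g).rank ≤ M.rank := by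
  rw [submatrix_factor M f g]
  exact le_trans (Matrix.rank_mul_le_left _ _) (Matrix.rank_mul_le_right _ _)

lemma exists_minor {p q : ℕ} (M : Matrix (Fin p) (Fin q) ℂ) {r : ℕ} (hr : M.rank = r) :
    ∃ f : Fin r → Fin p, ∃ g : Fin r → Fin q, (M.submatrix f g).det ≠ 0 := by
  obtain ⟨f, hf⟩ := exists_rows_li M hr
  set C : Matrix (Fin r) (Fin q) ℂ := M.submatrix f id with hC
  have hfC : LinearIndependent ℂ (fun i => C i) := hf
  have hCrank : C.rank = r := by
    rw [LinearIndependent.rank_matrix (M := C) hfC, Fintype.card_fin]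
  have hCt : Cᵀ.rank = r := by rw [Matrix.rank_transpose, hCrank]
  obtain ⟨g, hg⟩ := exists_rows_li Cᵀ hCt
  set D : Matrix (Fin r) (Fin r) ℂ := Cᵀ.submatrix g id with hD
  have hgD : LinearIndependent ℂ (fun i => D i) := hg
  have hDu : IsUnit D := Matrix.linearIndependent_rows_iff_isUnit.mp hgD
  have hdet : D.det ≠ 0 := IsUnit.ne_zero ((Matrix.isUnit_iff_isUnit_det D).mp hDu)
  refine ⟨f, g, ?_⟩
  have : M.submatrix f g = Dᵀ := by
    ext i j
    simp [hD, hC]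
  rw [this, Matrix.det_transpose]
  exact hdet

lemma eventually_rank_le {X : Type*} [TopologicalSpace X] {p q : ℕ}
    {M : X → Matrix (Fin p) (Fin q) ℂ} {ξ : X} (h : ContinuousAt M ξ) :
    ∀ᶠ ζ in nhds ξ, (M ξ).rank ≤ (M ζ).rank := by
  obtain ⟨f, g, hdet⟩ := exists_minor (M ξ) rfl
  have hcdet : Continuous fun N : Matrix (Fin p) (Fin q) ℂ => (N.submatrix f g).det :=
    (continuous_id.matrix_submatrix f g).matrix_det
  have hc : ContinuousAt (fun ζ => ((M ζ).submatrix f g).det) ξ :=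
    hcdet.continuousAt.comp h
  filter_upwards [hc.eventually_ne hdet] with ζ hζ
  have h1 : ((M ζ).submatrix f g).rank = (M ξ).rank := by
    rw [Matrix.rank_of_isUnit _ ((Matrix.isUnit_iff_isUnit_det _).mpr (isUnit_iff_ne_zero.mpr hζ)),
      Fintype.card_fin]
  calc (M ξ).rank = ((M ζ).submatrix f g).rank := h1.symm
    _ ≤ (M ζ).rank := rank_submatrix_le' _ f g

lemma finrank_ker_prod {V : Type*} [AddCommGroup V] [Module ℂ V] [FiniteDimensional ℂ V]
    (f : V →ₗ[ℂ] V) {ι : Type*} [DecidableEq ι] (s : Finset ι) (p : ι → ℂ[X])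
    (hcop : ∀ i ∈ s, ∀ j ∈ s, i ≠ j → IsCoprime (p i) (p j)) :
    Module.finrank ℂ (LinearMap.ker (aeval f (∏ i ∈ s, p i))) =
      ∑ i ∈ s, Module.finrank ℂ (LinearMap.ker (aeval f (p i))) := by
  induction s using Finset.induction_on with
  | empty => rw [Finset.prod_empty, Finset.sum_empty, Polynomial.aeval_one, Module.End.one_eq_id, LinearMap.ker_id, finrank_bot]
  | @insert a s ha ih =>
    have hcp : IsCoprime (p a) (∏ i ∈ s, p i) :=
      IsCoprime.prod_right fun i hi =>
        hcop a (Finset.mem_insert_self a s) i (Finset.mem_insert_of_mem hi)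
          (fun h => ha (h ▸ hi))
    rw [Finset.prod_insert ha, Finset.sum_insert ha,
      ← Polynomial.sup_ker_aeval_eq_ker_aeval_mul_of_coprime f hcp]
    have hdisj := Polynomial.disjoint_ker_aeval_of_isCoprime f hcp
    have hfr := Submodule.finrank_sup_add_finrank_inf_eq
      (LinearMap.ker (aeval f (p a))) (LinearMap.ker (aeval f (∏ i ∈ s, p i)))
    rw [hdisj.eq_bot, finrank_bot, add_zero] at hfr
    rw [hfr, ih (fun i hi j hj hij => hcop i (Finset.mem_insert_of_mem hi) j
      (Finset.mem_insert_of_mem hj) hij)]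

lemma coprime_pow {a b : ℂ} (h : a ≠ b) (k : ℕ) :
    IsCoprime ((C a - X) ^ k) ((C b - X) ^ k) := by
  have h1 : IsCoprime (X - C a) (X - C b) :=
    isCoprime_X_sub_C_of_isUnit_sub (sub_ne_zero_of_ne h).isUnit
  have h2 : IsCoprime (C a - X) (C b - X) := by
    simpa [neg_sub] using h1.neg_left.neg_right
  exact h2.pow

lemma aeval_mulVecLin {n : ℕ} (Φ : Matrix (Fin n) (Fin n) ℂ) (P : ℂ[X]) :
    (aeval Φ P).mulVecLin = aeval Φ.mulVecLin P := by
  have := Polynomial.aeval_algHom_apply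
    (Matrix.toLinAlgEquiv' (n := Fin n) (R := ℂ)).toAlgHom Φ P
  exact this.symm

lemma smul_one_sub_eq_aeval {n : ℕ} (Φ : Matrix (Fin n) (Fin n) ℂ) (μ : ℂ) (k : ℕ) :
    (μ • (1 : Matrix (Fin n) (Fin n) ℂ) - Φ) ^ k = aeval Φ ((C μ - X) ^ k) := by
  rw [map_pow]
  congr 1
  simp [Algebra.algebraMap_eq_smul_one]

lemma theta_identity {n : ℕ} (Φ : Matrix (Fin n) (Fin n) ℂ) (k : ℕ) :
    (thetaMat Φ ^ k).rank +
      ∑ μ ∈ eigFinset Φ, nullity ((μ • (1 : Matrix (Fin n) (Fin n) ℂ) - Φ) ^ k) = n := by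
  classical
  have hth : thetaMat Φ ^ k = aeval Φ (∏ μ ∈ eigFinset Φ, (C μ - X) ^ k) := by
    rw [thetaMat, ← map_pow, Finset.prod_pow]
  have hnull : nullity (thetaMat Φ ^ k) =
      ∑ μ ∈ eigFinset Φ, nullity ((μ • (1 : Matrix (Fin n) (Fin n) ℂ) - Φ) ^ k) := by
    rw [hth]
    have h1 : nullity (aeval Φ (∏ μ ∈ eigFinset Φ, (C μ - X) ^ k)) =
        Module.finrank ℂ
          (LinearMap.ker (aeval Φ.mulVecLin (∏ μ ∈ eigFinset Φ, (C μ - X) ^ k))) := by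
      rw [nullity, aeval_mulVecLin]
    rw [h1, finrank_ker_prod Φ.mulVecLin (eigFinset Φ) (fun μ => (C μ - X) ^ k)
      (fun a _ b _ hab => coprime_pow hab k)]
    refine Finset.sum_congr rfl fun μ _ => ?_
    rw [smul_one_sub_eq_aeval, nullity, aeval_mulVecLin]
  rw [← hnull]
  exact rank_add_nullity (thetaMat Φ ^ k)

end Stmt10Aux

set_option maxHeartbeats 1000000 in
/-- at a non-splitting point `ξ`, with continuous eigenvalue functions
`λ₁,…,λ_m` on a connected open neighborhood `U` free of splitting points (tracking the
distinct eigenvalues with constant algebraic multiplicities), local constancy of all ranks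
`rank((Θ_{A(ζ)})^k)`, `1 ≤ k ≤ n−1`, near `ξ` is equivalent to local constancy of all ranks
`rank((λⱼ(ζ)I − A(ζ))^k)`, `1 ≤ k ≤ n−1`, `1 ≤ j ≤ m`, near `ξ`. -/
theorem stmt10 {X : Type*} [TopologicalSpace X] {n : ℕ}
    (A : X → Matrix (Fin n) (Fin n) ℂ)
    (hcont : ∀ i j, Continuous fun ζ => A ζ i j)
    (ξ : X) (hns : ¬ IsSplitPtMat A ξ)
    (U : Set X) (hUo : IsOpen U) (hξU : ξ ∈ U) (hUc : IsConnected U)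
    (hUns : ∀ ζ ∈ U, ¬ IsSplitPtMat A ζ)
    (m : ℕ) (lam : Fin m → X → ℂ)
    (hlamc : ∀ j, ContinuousOn (lam j) U)
    (hlaminj : ∀ ζ ∈ U, ∀ j k : Fin m, j ≠ k → lam j ζ ≠ lam k ζ)
    (hlameig : ∀ ζ ∈ U, ∀ z : ℂ, z ∈ eigFinset (A ζ) ↔ ∃ j, lam j ζ = z)
    (hlammult : ∀ ζ ∈ U, ∀ j : Fin m,
      (Matrix.charpoly (A ζ)).rootMultiplicity (lam j ζ) =
        (Matrix.charpoly (A ξ)).rootMultiplicity (lam j ξ)) :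
    (∃ V : Set X, IsOpen V ∧ ξ ∈ V ∧ V ⊆ U ∧
        ∀ k : ℕ, 1 ≤ k → k ≤ n - 1 → ∀ ζ ∈ V,
          ((thetaMat (A ζ)) ^ k).rank = ((thetaMat (A ξ)) ^ k).rank) ↔
    (∃ V : Set X, IsOpen V ∧ ξ ∈ V ∧ V ⊆ U ∧
        ∀ k : ℕ, 1 ≤ k → k ≤ n - 1 → ∀ j : Fin m, ∀ ζ ∈ V,
          (((lam j ζ) • (1 : Matrix (Fin n) (Fin n) ℂ) - A ζ) ^ k).rank =
            (((lam j ξ) • (1 : Matrix (Fin n) (Fin n) ℂ) - A ξ) ^ k).rank) := by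
  classical
  -- the master identity at points of `U`
  have hkey : ∀ ζ ∈ U, ∀ k : ℕ,
      (thetaMat (A ζ) ^ k).rank +
        ∑ j : Fin m,
          Stmt10Aux.nullity (((lam j ζ) • (1 : Matrix (Fin n) (Fin n) ℂ) - A ζ) ^ k) = n := by
    intro ζ hζ k
    have himg : eigFinset (A ζ) = Finset.image (fun j => lam j ζ) Finset.univ := by
      ext z
      simp only [Finset.mem_image, Finset.mem_univ, true_and]
      exact (hlameig ζ hζ z).trans (by tauto)
    have hid := Stmt10Aux.theta_identity (A ζ) k
    rw [himg, Finset.sum_image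
      (fun a _ b _ hab => by
        by_contra hne
        exact hlaminj ζ hζ a b hne hab)] at hid
    exact hid
  have hrn : ∀ (ζ : X) (j : Fin m) (k : ℕ),
      (((lam j ζ) • (1 : Matrix (Fin n) (Fin n) ℂ) - A ζ) ^ k).rank +
        Stmt10Aux.nullity (((lam j ζ) • (1 : Matrix (Fin n) (Fin n) ℂ) - A ζ) ^ k) = n :=
    fun ζ j k => Stmt10Aux.rank_add_nullity _
  have hAc : Continuous A := continuous_pi fun i => continuous_pi fun j => hcont i j
  constructor
  · rintro ⟨V, hVo, hξV, hVU, hV⟩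
    -- lower semicontinuity of each rank near ξ
    have hev : ∀ᶠ ζ in nhds ξ, ∀ j : Fin m, ∀ k ∈ Finset.Icc 1 (n - 1),
        (((lam j ξ) • (1 : Matrix (Fin n) (Fin n) ℂ) - A ξ) ^ k).rank ≤
          (((lam j ζ) • (1 : Matrix (Fin n) (Fin n) ℂ) - A ζ) ^ k).rank := by
      rw [Filter.eventually_all]
      intro j
      rw [Filter.eventually_all_finset]
      intro k _
      refine Stmt10Aux.eventually_rank_le
        (M := fun ζ => ((lam j ζ) • (1 : Matrix (Fin n) (Fin n) ℂ) - A ζ) ^ k) ?_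
      have hlj : ContinuousAt (lam j) ξ := (hlamc j).continuousAt (hUo.mem_nhds hξU)
      exact ((hlj.smul continuousAt_const).sub hAc.continuousAt).pow k
    have hall : ∀ᶠ ζ in nhds ξ, (∀ j : Fin m, ∀ k ∈ Finset.Icc 1 (n - 1),
        (((lam j ξ) • (1 : Matrix (Fin n) (Fin n) ℂ) - A ξ) ^ k).rank ≤
          (((lam j ζ) • (1 : Matrix (Fin n) (Fin n) ℂ) - A ζ) ^ k).rank) ∧ ζ ∈ V :=
      hev.and (hVo.mem_nhds hξV)
    obtain ⟨W, hWsub, hWo, hξW⟩ := mem_nhds_iff.mp hall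
    refine ⟨W, hWo, hξW, fun ζ hζ => hVU (hWsub hζ).2, ?_⟩
    intro k hk1 hk2 j ζ hζ
    have hζV : ζ ∈ V := (hWsub hζ).2
    have hge : ∀ j' : Fin m,
        (((lam j' ξ) • (1 : Matrix (Fin n) (Fin n) ℂ) - A ξ) ^ k).rank ≤
          (((lam j' ζ) • (1 : Matrix (Fin n) (Fin n) ℂ) - A ζ) ^ k).rank :=
      fun j' => (hWsub hζ).1 j' k (Finset.mem_Icc.mpr ⟨hk1, hk2⟩)
    have hidζ := hkey ζ (hVU hζV) k
    have hidξ := hkey ξ hξU k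
    have hθ := hV k hk1 hk2 ζ hζV
    have hsum : ∑ j' : Fin m,
        Stmt10Aux.nullity (((lam j' ζ) • (1 : Matrix (Fin n) (Fin n) ℂ) - A ζ) ^ k) =
        ∑ j' : Fin m,
          Stmt10Aux.nullity (((lam j' ξ) • (1 : Matrix (Fin n) (Fin n) ℂ) - A ξ) ^ k) := by
      omega
    have hle : ∀ j' ∈ Finset.univ,
        Stmt10Aux.nullity (((lam j' ζ) • (1 : Matrix (Fin n) (Fin n) ℂ) - A ζ) ^ k) ≤
          Stmt10Aux.nullity (((lam j' ξ) • (1 : Matrix (Fin n) (Fin n) ℂ) - A ξ) ^ k) := by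
      intro j' _
      have h1 := hrn ζ j' k
      have h2 := hrn ξ j' k
      have h3 := hge j'
      omega
    have heq := (Finset.sum_eq_sum_iff_of_le hle).mp hsum j (Finset.mem_univ j)
    have h1 := hrn ζ j k
    have h2 := hrn ξ j k
    omega
  · rintro ⟨V, hVo, hξV, hVU, hV⟩
    refine ⟨V, hVo, hξV, hVU, ?_⟩
    intro k hk1 hk2 ζ hζ
    have hidζ := hkey ζ (hVU hζ) k
    have hidξ := hkey ξ hξU k
    have hsum : ∑ j : Fin m,
        Stmt10Aux.nullity (((lam j ζ) • (1 : Matrix (Fin n) (Fin n) ℂ) - A ζ) ^ k) =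
        ∑ j : Fin m,
          Stmt10Aux.nullity (((lam j ξ) • (1 : Matrix (Fin n) (Fin n) ℂ) - A ξ) ^ k) := by
      refine Finset.sum_congr rfl fun j _ => ?_
      have h1 := hrn ζ j k
      have h2 := hrn ξ j k
      have h3 := hV k hk1 hk2 j ζ hζ
      omega
    omega
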